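/- Let Δ = {α₁, …, α_l} be a base of Φ, and assume Φ spans V. For each i there exists a unique element ω̌_i of the ℚ-span of Φ̌ with ⟨α_j, ω̌_i⟩ = δ_{ij} for all j (the fundamental coweight associated to α_i), and |W| · ω̌_i lies in the ℤ-span of Φ̌; equivalently, every fundamental coweight lies in ℤ[1/|W|]·Φ̌. -/

import Mathlib

open scoped Classical

/-- Let `Φ` be a finite, reduced, crystallographic root system spanning `V`,
with Weyl group `W = ⟨s α : α ∈ Φ⟩`, and let `Δ` be a base of `Φ`.  For each `α ∈ Δ` there is a
unique element `ω̌` of the `ℚ`-span of the coroots `Φ̌` with `⟨β, ω̌⟩ = δ_{βα}` for all `β ∈ Δ`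
(the fundamental coweight associated to `α`), and `|W| • ω̌` lies in the `ℤ`-span of `Φ̌`. -/
theorem fundamental_coweight_in_weyl_order_inv_coroot_lattice
    {V V' : Type*} [AddCommGroup V] [Module ℚ V] [AddCommGroup V'] [Module ℚ V']
    [FiniteDimensional ℚ V] [FiniteDimensional ℚ V']
    (P : V →ₗ[ℚ] V' →ₗ[ℚ] ℚ) [P.IsPerfPair]
    (Φ : Set V) (hfin : Φ.Finite) (coroot : V → V')
    (h2 : ∀ α ∈ Φ, P α (coroot α) = 2)
    (hcrys : ∀ α ∈ Φ, ∀ β ∈ Φ, ∃ n : ℤ, P β (coroot α) = (n : ℚ))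
    (hred : ∀ α ∈ Φ, ∀ c : ℚ, c • α ∈ Φ → c = 1 ∨ c = -1)
    (s : V → (V ≃ₗ[ℚ] V))
    (hs_def : ∀ α ∈ Φ, ∀ v : V, s α v = v - (P v (coroot α)) • α)
    (hs_perm : ∀ α ∈ Φ, ∀ β ∈ Φ, s α β ∈ Φ)
    (hspan : Submodule.span ℚ Φ = ⊤)
    (Δ : Set V) (hΔΦ : Δ ⊆ Φ)
    (hΔind : LinearIndependent ℚ ((↑) : Δ → V))
    (hΔbase : ∀ β ∈ Φ, ∃ c : V →₀ ℤ, ↑c.support ⊆ Δ ∧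
        β = c.sum (fun α n => (n : ℚ) • α) ∧ ((∀ α, 0 ≤ c α) ∨ (∀ α, c α ≤ 0))) :
    ∀ α ∈ Δ,
      (∃! ω : V', ω ∈ Submodule.span ℚ (coroot '' Φ) ∧
          ∀ β ∈ Δ, P β ω = if β = α then 1 else 0) ∧
      (∀ ω : V', ω ∈ Submodule.span ℚ (coroot '' Φ) →
          (∀ β ∈ Δ, P β ω = if β = α then 1 else 0) →
          (Nat.card ↥(Subgroup.closure (s '' Φ)) : ℤ) • ω ∈
            Submodule.span ℤ (coroot '' Φ)) := by
  -- notation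
  set W : Subgroup (V ≃ₗ[ℚ] V) := Subgroup.closure (s '' Φ) with hW
  set L : Submodule ℤ V' := Submodule.span ℤ (coroot '' Φ) with hL
  -- right injectivity of the pairing
  have inj' : ∀ ω₁ ω₂ : V', (∀ v : V, P v ω₁ = P v ω₂) → ω₁ = ω₂ := by
    intro ω₁ ω₂ h
    exact (LinearMap.IsPerfPair.bijective_right P).injective (LinearMap.ext h)
  -- s α is an involution
  have hs_invol : ∀ a ∈ Φ, ∀ v : V, s a (s a v) = v := by
    intro a ha v
    rw [hs_def a ha, hs_def a ha]
    have h2a : P a (coroot a) = 2 := h2 a ha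
    simp only [map_sub, map_smul, LinearMap.sub_apply, LinearMap.smul_apply, h2a, smul_eq_mul]
    module
  have hs_inv : ∀ a ∈ Φ, (s a)⁻¹ = s a := by
    intro a ha
    ext v
    have : (s a) ((s a) v) = v := hs_invol a ha v
    calc (s a)⁻¹ v = (s a)⁻¹ ((s a) ((s a) v)) := by rw [this]
      _ = s a v := (s a).symm_apply_apply _
  -- W preserves Φ (in both directions)
  have hWΦ : ∀ w ∈ W, (∀ β ∈ Φ, w β ∈ Φ) ∧ (∀ β ∈ Φ, w⁻¹ β ∈ Φ) := by
    intro w hw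
    refine Subgroup.closure_induction ?_ ?_ ?_ ?_ hw
    · rintro x ⟨a, ha, rfl⟩
      refine ⟨fun β hβ => hs_perm a ha β hβ, ?_⟩
      rw [hs_inv a ha]
      exact fun β hβ => hs_perm a ha β hβ
    · exact ⟨fun β hβ => hβ, fun β hβ => hβ⟩
    · rintro x y hx hy ⟨hx1, hx2⟩ ⟨hy1, hy2⟩
      constructor
      · intro β hβ
        have : (x * y) β = x (y β) := rfl
        rw [this]; exact hx1 _ (hy1 _ hβ)
      · intro β hβ
        have : (x * y)⁻¹ β = y⁻¹ (x⁻¹ β) := by rw [mul_inv_rev]; rfl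
        rw [this]; exact hy2 _ (hx2 _ hβ)
    · rintro x hx ⟨h1, h2⟩
      exact ⟨h2, by simpa using h1⟩
  -- the dual action
  let σ : (V ≃ₗ[ℚ] V) → V' →ₗ[ℚ] V' := fun e =>
    (P.flip.toPerfPair.symm.toLinearMap) ∘ₗ (e.symm : V →ₗ[ℚ] V).dualMap ∘ₗ (P.flip.toPerfPair.toLinearMap)
  have pairσ : ∀ (e : V ≃ₗ[ℚ] V) (ω : V') (v : V),
      P v (σ e ω) = P (e.symm v) ω := by
    intro e ω v
    show P v (P.flip.toPerfPair.symm ((e.symm : V →ₗ[ℚ] V).dualMap (P.flip.toPerfPair ω))) = _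
    have := P.apply_toPerfPair_flip ((e.symm : V →ₗ[ℚ] V).dualMap (P.flip.toPerfPair ω)) v
    rw [this]
    simp
  have σ_one : ∀ ω : V', σ 1 ω = ω := by
    intro ω
    refine inj' _ _ fun v => ?_
    rw [pairσ]
    rfl
  have σ_comp : ∀ (u w : V ≃ₗ[ℚ] V) (ω : V'), σ (u * w) ω = σ u (σ w ω) := by
    intro u w ω
    refine inj' _ _ fun v => ?_
    rw [pairσ, pairσ, pairσ]
    rfl
  -- reflection formula for the dual action
  have σ_s : ∀ a ∈ Φ, ∀ (ω : V'), ω - σ (s a) ω = (P a ω) • coroot a := by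
    intro a ha ω
    refine inj' _ _ fun v => ?_
    have hsymm : (s a).symm v = s a v := by
      conv_lhs => rw [← hs_invol a ha v]
      exact (s a).symm_apply_apply _
    rw [map_sub, pairσ, hsymm, hs_def a ha, map_sub, map_smul]
    simp only [map_smul, smul_eq_mul, LinearMap.sub_apply, LinearMap.smul_apply]
    ring
  -- the key induction: ω - σ w ω lies in the coroot lattice
  have hB : ∀ w ∈ W, ∀ ω : V', (∀ β ∈ Φ, ∃ n : ℤ, P β ω = (n : ℚ)) →
      ω - σ w ω ∈ L := by
    intro w hw
    refine Subgroup.closure_induction ?_ ?_ ?_ ?_ hw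
    · rintro x ⟨a, ha, rfl⟩ ω hint
      obtain ⟨n, hn⟩ := hint a ha
      rw [σ_s a ha ω, hn, Int.cast_smul_eq_zsmul ℚ]
      exact Submodule.smul_mem _ n (Submodule.subset_span ⟨a, ha, rfl⟩)
    · intro ω hint
      rw [σ_one, sub_self]
      exact Submodule.zero_mem _
    · intro x y hx hy ihx ihy ω hint
      have hyint : ∀ β ∈ Φ, ∃ n : ℤ, P β (σ y ω) = (n : ℚ) := by
        intro β hβ
        rw [pairσ]
        exact hint _ ((hWΦ y⁻¹ (inv_mem hy)).1 β hβ)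
      have : ω - σ (x * y) ω = (ω - σ y ω) + (σ y ω - σ x (σ y ω)) := by
        rw [σ_comp]; abel
      rw [this]
      exact Submodule.add_mem _ (ihy ω hint) (ihx _ hyint)
    · intro x hx ih ω hint
      have hxint : ∀ β ∈ Φ, ∃ n : ℤ, P β (σ x⁻¹ ω) = (n : ℚ) := by
        intro β hβ
        rw [pairσ]
        exact hint _ ((hWΦ x⁻¹ (inv_mem hx)).2 β hβ)
      have h1 : σ x⁻¹ ω - σ x (σ x⁻¹ ω) ∈ L := ih _ hxint
      have h2 : σ x (σ x⁻¹ ω) = ω := by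
        rw [← σ_comp, mul_inv_cancel, σ_one]
      rw [h2] at h1
      simpa using Submodule.neg_mem _ h1
  -- W is finite
  haveI : Finite Φ := hfin.to_subtype
  haveI hWfin : Finite ↥W := by
    have hF : Function.Injective (fun (w : ↥W) (x : Φ) =>
        (⟨w.1 x.1, (hWΦ w.1 w.2).1 x.1 x.2⟩ : Φ)) := by
      intro w w' h
      have : ∀ x ∈ Φ, w.1 x = w'.1 x := by
        intro x hx
        exact congrArg Subtype.val (congrFun h ⟨x, hx⟩)
      have : (w.1 : V →ₗ[ℚ] V) = (w'.1 : V →ₗ[ℚ] V) :=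
        LinearMap.ext_on hspan this
      exact Subtype.ext (LinearEquiv.toLinearMap_injective this)
    exact Finite.of_injective _ hF
  haveI : Fintype ↥W := Fintype.ofFinite _
  -- Δ spans V
  have hΔspan : Submodule.span ℚ Δ = ⊤ := by
    rw [eq_top_iff, ← hspan, Submodule.span_le]
    intro β hβ
    obtain ⟨c, hsupp, hsum, -⟩ := hΔbase β hβ
    rw [hsum]
    refine (fun (hmem : ∀ γ, c γ ≠ 0 → ((c γ : ℚ) • γ) ∈ Submodule.span ℚ Δ) =>
      Submodule.sum_mem _ fun γ hγ => hmem γ (Finsupp.mem_support_iff.mp hγ)) fun γ hγ => ?_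
    exact Submodule.smul_mem _ _
      (Submodule.subset_span (hsupp (Finsupp.mem_support_iff.mpr hγ)))
  let Bas : Module.Basis Δ ℚ V := Module.Basis.mk hΔind (by rw [Subtype.range_coe]; exact hΔspan.ge)
  intro α hα
  -- the fundamental coweight
  set ω : V' := P.flip.toPerfPair.symm (Bas.coord ⟨α, hα⟩) with hω
  have pairω : ∀ v : V, P v ω = Bas.coord ⟨α, hα⟩ v := by
    intro v
    exact P.apply_toPerfPair_flip (Bas.coord ⟨α, hα⟩) v
  have pairΔ : ∀ β ∈ Δ, P β ω = if β = α then 1 else 0 := by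
    intro β hβ
    rw [pairω]
    have hb : Bas.coord ⟨α, hα⟩ β = Finsupp.single (⟨β, hβ⟩ : Δ) 1 ⟨α, hα⟩ := by
      conv_lhs => rw [show β = Bas ⟨β, hβ⟩ from (Module.Basis.mk_apply hΔind _ ⟨β, hβ⟩).symm]
      rw [Module.Basis.coord_apply, Module.Basis.repr_self]
    rw [hb, Finsupp.single_apply]
    by_cases h : β = α
    · subst h; rw [if_pos rfl, if_pos rfl]
    · rw [if_neg fun hc => h (congrArg Subtype.val hc), if_neg h]
  -- pairings of ω with roots are integers
  have hint : ∀ β ∈ Φ, ∃ n : ℤ, P β ω = (n : ℚ) := by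
    intro β hβ
    obtain ⟨c, hsupp, hsum, -⟩ := hΔbase β hβ
    refine ⟨c α, ?_⟩
    rw [hsum, Finsupp.sum, map_sum, LinearMap.sum_apply]
    have hterm : ∀ γ ∈ c.support, P ((c γ : ℚ) • γ) ω
        = if γ = α then (c γ : ℚ) else 0 := by
      intro γ hγ
      rw [map_smul, LinearMap.smul_apply, smul_eq_mul, pairΔ γ (hsupp hγ)]
      split_ifs <;> ring
    rw [Finset.sum_congr rfl hterm, Finset.sum_ite_eq' c.support α fun γ => (c γ : ℚ)]
    split_ifs with h
    · rfl
    · rw [Finsupp.notMem_support_iff.mp h]; simp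
  -- the averaged sum vanishes
  set Θ : V' := ∑ w : ↥W, σ w.1 ω with hΘ
  have hσΘ : ∀ u : ↥W, σ u.1 Θ = Θ := by
    intro u
    calc σ u.1 Θ = ∑ w : ↥W, σ ((u * w).1) ω := by
          rw [hΘ, map_sum]
          exact Finset.sum_congr rfl fun w _ => (σ_comp u.1 w.1 ω).symm
      _ = ∑ w : ↥W, σ w.1 ω :=
          Fintype.sum_bijective (fun w => u * w) (Group.mulLeft_bijective u) _ _ fun w => rfl
      _ = Θ := hΘ.symm
  have hpair0 : ∀ a ∈ Φ, P a Θ = 0 := by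
    intro a ha
    have hmem : s a ∈ W := Subgroup.subset_closure ⟨a, ha, rfl⟩
    have hsymm : (s a).symm a = s a a := by
      calc (s a).symm a = (s a)⁻¹ a := rfl
        _ = (s a) a := by rw [hs_inv a ha]
    have h1 : P a Θ = P (s a a) Θ := by
      conv_lhs => rw [← hσΘ ⟨s a, hmem⟩]
      rw [pairσ]
      exact congrFun (congrArg _ (congrArg _ hsymm)) Θ
    have hsa : s a a = -a := by
      rw [hs_def a ha, h2 a ha]
      module
    rw [hsa, map_neg, LinearMap.neg_apply] at h1
    linarith
  have hall : ∀ v : V, P v Θ = 0 := by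
    intro v
    have hv : v ∈ Submodule.span ℚ Φ := hspan ▸ Submodule.mem_top
    induction hv using Submodule.span_induction with
    | mem x hx => exact hpair0 x hx
    | zero => show P 0 Θ = 0; rw [map_zero, LinearMap.zero_apply]
    | add x y hx hy ihx ihy => rw [map_add, LinearMap.add_apply, ihx, ihy, add_zero]
    | smul c x hx ih => rw [map_smul, LinearMap.smul_apply, ih, smul_zero]
  have hΘ0 : Θ = 0 := inj' Θ 0 fun v => by rw [hall v, map_zero]
  -- |W| • ω lies in the coroot lattice
  have hsum : ∑ w : ↥W, (ω - σ w.1 ω) = (Fintype.card ↥W) • ω := by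
    rw [Finset.sum_sub_distrib, ← hΘ, hΘ0, sub_zero, Finset.sum_const, Finset.card_univ]
  have hNω : (Fintype.card ↥W) • ω ∈ L := by
    rw [← hsum]
    exact Submodule.sum_mem _ fun w _ => hB w.1 w.2 ω hint
  -- ω lies in the ℚ-span of the coroots
  haveI : Nonempty ↥W := ⟨1⟩
  have hcard0 : (Fintype.card ↥W : ℚ) ≠ 0 := by
    exact_mod_cast Fintype.card_ne_zero
  have hωmem : ω ∈ Submodule.span ℚ (coroot '' Φ) := by
    have h1 : (Fintype.card ↥W : ℚ) • ω ∈ Submodule.span ℚ (coroot '' Φ) := by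
      rw [Nat.cast_smul_eq_nsmul]
      exact Submodule.span_le_restrictScalars ℤ ℚ (coroot '' Φ) hNω
    have h2 := Submodule.smul_mem _ ((Fintype.card ↥W : ℚ)⁻¹) h1
    rwa [inv_smul_smul₀ hcard0] at h2
  -- uniqueness
  have huniq : ∀ ω' : V', (∀ β ∈ Δ, P β ω' = if β = α then 1 else 0) → ω' = ω := by
    intro ω' hp
    have hfl : P.flip ω' = P.flip ω :=
      LinearMap.ext_on hΔspan fun x hx => by
        simp only [LinearMap.flip_apply]
        rw [hp x hx, pairΔ x hx]
    exact inj' _ _ fun v => LinearMap.congr_fun hfl v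
  refine ⟨⟨ω, ⟨hωmem, pairΔ⟩, fun ω' h => huniq ω' h.2⟩, ?_⟩
  intro ω' _ hp'
  rw [huniq ω' hp', Nat.card_eq_fintype_card, natCast_zsmul]
  exact hNω
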